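/- Let S, L ∈ ℝ^{m×n} with Supp(S* − S) ⊆ Supp(S*), set E = S* − S, G = Σ_{i=1}^n Q_i Q_iᵀ(L − L*)e_i e_iᵀ, F = Σ_{i=1}^n Q_i Q_iᵀ(S − S*)e_i e_iᵀ, M = F + G + E, s = ‖E‖_{ℓ∞}, and l = max_i ‖G e_i‖_{ℓ2}. Then for every u ∈ ℝ^m: ‖Mᵀ u‖_{ℓ∞} ≤ [ ν√(d/m)·l + α₁(1 + ν²d)·s ]·m·‖u‖_{ℓ∞}. -/

import Mathlib

open Matrix
open scoped BigOperators

noncomputable def l2 {n : ℕ} (v : Fin n → ℝ) : ℝ := Real.sqrt (∑ i, v i ^ 2)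

noncomputable def vinf {n : ℕ} (v : Fin n → ℝ) : ℝ := ⨆ i, |v i|

noncomputable def linf {m n : ℕ} (X : Matrix (Fin m) (Fin n) ℝ) : ℝ := ⨆ i, ⨆ j, |X i j|

noncomputable def frob {m n : ℕ} (X : Matrix (Fin m) (Fin n) ℝ) : ℝ :=
  Real.sqrt (∑ i, ∑ j, X i j ^ 2)

noncomputable def spec {m n : ℕ} (X : Matrix (Fin m) (Fin n) ℝ) : ℝ :=
  ‖LinearMap.toContinuousLinearMap (Matrix.toEuclideanLin X)‖

def supp {m n : ℕ} (X : Matrix (Fin m) (Fin n) ℝ) : Set (Fin m × Fin n) :=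
  {p | X p.1 p.2 ≠ 0}

noncomputable def sthr {m n : ℕ} (ζ : ℝ) (X : Matrix (Fin m) (Fin n) ℝ) :
    Matrix (Fin m) (Fin n) ℝ :=
  Matrix.of fun i j => Real.sign (X i j) * max (|X i j| - ζ) 0

lemma l2_nonneg {k : ℕ} (v : Fin k → ℝ) : 0 ≤ l2 v := Real.sqrt_nonneg _

lemma abs_dot_le {k : ℕ} (a b : Fin k → ℝ) : |∑ i, a i * b i| ≤ l2 a * l2 b := by
  rw [abs_le]
  constructor
  · have h := Real.sum_mul_le_sqrt_mul_sqrt Finset.univ (fun i => -a i) b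
    have h2 : ∑ i, -a i * b i = -∑ i, a i * b i := by
      rw [← Finset.sum_neg_distrib]; congr 1; funext i; ring
    have h3 : ∑ i, (-a i) ^ 2 = ∑ i, a i ^ 2 := by congr 1; funext i; ring
    rw [h2, h3] at h
    unfold l2
    linarith
  · exact Real.sum_mul_le_sqrt_mul_sqrt Finset.univ a b

lemma l2_smul {k : ℕ} (c : ℝ) (v : Fin k → ℝ) : l2 (c • v) = |c| * l2 v := by
  unfold l2
  have h : ∑ i, (c • v) i ^ 2 = c ^ 2 * ∑ i, v i ^ 2 := by
    rw [Finset.mul_sum]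
    exact Finset.sum_congr rfl fun i _ => by simp [mul_pow]
  rw [h, Real.sqrt_mul (sq_nonneg c), Real.sqrt_sq_eq_abs]

def toE {k : ℕ} (v : Fin k → ℝ) : EuclideanSpace ℝ (Fin k) := WithLp.toLp 2 v

lemma l2_eq_norm {k : ℕ} (v : Fin k → ℝ) : l2 v = ‖toE v‖ := by
  rw [EuclideanSpace.norm_eq]
  simp [l2, toE, sq_abs]

lemma toE_sum {k : ℕ} {ι : Type*} (s : Finset ι) (f : ι → Fin k → ℝ) :
    toE (∑ i ∈ s, f i) = ∑ i ∈ s, toE (f i) := by simp [toE]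

lemma l2_sum_le {k : ℕ} {ι : Type*} (s : Finset ι) (f : ι → Fin k → ℝ) :
    l2 (∑ i ∈ s, f i) ≤ ∑ i ∈ s, l2 (f i) := by
  simp only [l2_eq_norm, toE_sum]
  exact norm_sum_le s fun i => toE (f i)

lemma l2_mulVec_ortho {m d : ℕ} (Q : Matrix (Fin m) (Fin d) ℝ) (h : Qᵀ * Q = 1)
    (x : Fin d → ℝ) : l2 (Q *ᵥ x) = l2 x := by
  unfold l2
  congr 1
  have h1 : ∑ p, (Q *ᵥ x) p ^ 2 = (Q *ᵥ x) ⬝ᵥ (Q *ᵥ x) := by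
    simp [dotProduct, sq]
  have h2 : ∑ i, x i ^ 2 = x ⬝ᵥ x := by simp [dotProduct, sq]
  rw [h1, h2, dotProduct_mulVec, ← mulVec_transpose, mulVec_mulVec, h, one_mulVec]

lemma mulVec_decomp {m d : ℕ} (A : Matrix (Fin d) (Fin m) ℝ) (u : Fin m → ℝ) :
    A *ᵥ u = ∑ i, u i • (A *ᵥ Pi.single i 1) := by
  funext k
  have hsingle : ∀ i : Fin m, (A *ᵥ Pi.single i 1) k = A k i := by
    intro i
    simp [Matrix.mulVec, dotProduct, Pi.single_apply]
  calc (A *ᵥ u) k = ∑ i, A k i * u i := rfl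
  _ = ∑ i, u i * (A *ᵥ Pi.single i 1) k := by
      refine Finset.sum_congr rfl fun i _ => ?_
      rw [hsingle i]; ring
  _ = (∑ i, u i • (A *ᵥ Pi.single i 1)) k := by
      rw [Finset.sum_apply]
      exact Finset.sum_congr rfl fun i _ => rfl

lemma l2_mulVecT_le {m d : ℕ} (A : Matrix (Fin d) (Fin m) ℝ) (u : Fin m → ℝ) (C B : ℝ)
    (hB : ∀ i, |u i| ≤ B) (hC : ∀ p, l2 (A *ᵥ Pi.single p 1) ≤ C)
    (hB0 : 0 ≤ B) :
    l2 (A *ᵥ u) ≤ m * (C * B) := by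
  calc l2 (A *ᵥ u) = l2 (∑ i, u i • (A *ᵥ Pi.single i 1)) := by rw [← mulVec_decomp]
  _ ≤ ∑ i, l2 (u i • (A *ᵥ Pi.single i 1)) := l2_sum_le _ _
  _ = ∑ i, |u i| * l2 (A *ᵥ Pi.single i 1) := by
      exact Finset.sum_congr rfl fun i _ => l2_smul _ _
  _ ≤ ∑ _i : Fin m, B * C := by
      refine Finset.sum_le_sum fun i _ => mul_le_mul (hB i) (hC i) (l2_nonneg _) hB0
  _ = m * (C * B) := by
      rw [Finset.sum_const, Finset.card_univ, Fintype.card_fin, nsmul_eq_mul]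
      ring

lemma dot_sum_smul {k m : ℕ} (a : Fin k → ℝ) (e : Fin m → ℝ) (w : Fin m → Fin k → ℝ) :
    a ⬝ᵥ (∑ i, e i • w i) = ∑ i, e i * (a ⬝ᵥ w i) := by
  simp only [dotProduct, Finset.sum_apply, Pi.smul_apply, smul_eq_mul, Finset.mul_sum]
  rw [Finset.sum_comm]
  exact Finset.sum_congr rfl fun i _ => Finset.sum_congr rfl fun p _ => by ring

lemma col_sum {m n : ℕ} (w : Fin n → Fin m → ℝ) (i : Fin m) (j : Fin n) :
    (∑ k, Matrix.vecMulVec (w k) (Pi.single k (1 : ℝ))) i j = w j i := by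
  rw [Matrix.sum_apply]
  simp [Matrix.vecMulVec_apply, Pi.single_apply]

/-- Lemma 4 of the paper: bound on `‖Mᵀu‖_{ℓ∞}`. -/
theorem stmt4 (m n d : ℕ) (hm : 0 < m) (hn : 0 < n) (hd : 0 < d)
    (ν α₁ : ℝ) (hν : 0 < ν) (hα₁ : 0 < α₁)
    (Q : Fin n → Matrix (Fin m) (Fin d) ℝ)
    (hQortho : ∀ i, (Q i)ᵀ * Q i = 1)
    (hQe : ∀ (p : Fin m) (j : Fin n),
      l2 ((Q j)ᵀ *ᵥ Pi.single p 1) ≤ ν * Real.sqrt ((d : ℝ) / m))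
    (Lstar Sstar S L : Matrix (Fin m) (Fin n) ℝ)
    (hScol : ∀ j : Fin n,
      ((Finset.univ.filter fun i => Sstar i j ≠ 0).card : ℝ) ≤ α₁ * m)
    (hsupp : supp (Sstar - S) ⊆ supp Sstar)
    (E G F Mm : Matrix (Fin m) (Fin n) ℝ) (s l : ℝ)
    (hE : E = Sstar - S)
    (hG : G = ∑ i, Matrix.vecMulVec
        ((Q i * (Q i)ᵀ) *ᵥ fun p => (L - Lstar) p i) (Pi.single i 1))
    (hF : F = ∑ i, Matrix.vecMulVec
        ((Q i * (Q i)ᵀ) *ᵥ fun p => (S - Sstar) p i) (Pi.single i 1))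
    (hM : Mm = F + G + E)
    (hs : s = linf E)
    (hl : l = ⨆ i, l2 fun p => G p i) :
    ∀ u : Fin m → ℝ,
      vinf (Mmᵀ *ᵥ u) ≤
        (ν * Real.sqrt ((d : ℝ) / m) * l + α₁ * (1 + ν ^ 2 * d) * s) * m * vinf u := by
  intro u
  have hmne : Nonempty (Fin m) := ⟨⟨0, hm⟩⟩
  have hnne : Nonempty (Fin n) := ⟨⟨0, hn⟩⟩
  set B := vinf u with hB
  have hui : ∀ i, |u i| ≤ B := by
    intro i
    rw [hB, show vinf u = ⨆ i', |u i'| from rfl]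
    exact le_ciSup (f := fun i' => |u i'|) (Set.Finite.bddAbove (Set.finite_range _)) i
  have hB0 : 0 ≤ B := le_trans (abs_nonneg _) (hui (Classical.arbitrary _))
  set c := ν * Real.sqrt ((d : ℝ) / m) with hc
  have hc0 : 0 ≤ c := mul_nonneg hν.le (Real.sqrt_nonneg _)
  have hEij : ∀ i j, |E i j| ≤ s := by
    intro i j
    rw [hs]
    calc |E i j| ≤ ⨆ j', |E i j'| :=
          le_ciSup (f := fun j' => |E i j'|) (Set.Finite.bddAbove (Set.finite_range _)) j
    _ ≤ ⨆ i', ⨆ j', |E i' j'| :=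
          le_ciSup (f := fun i' => ⨆ j', |E i' j'|)
            (Set.Finite.bddAbove (Set.finite_range _)) i
  have hs0 : 0 ≤ s := le_trans (abs_nonneg _) (hEij ⟨0, hm⟩ ⟨0, hn⟩)
  have hlj : ∀ j, l2 (fun p => G p j) ≤ l := by
    intro j
    rw [hl]
    exact le_ciSup (f := fun j => l2 fun p => G p j)
      (Set.Finite.bddAbove (Set.finite_range _)) j
  have hl0 : 0 ≤ l := le_trans (l2_nonneg _) (hlj ⟨0, hn⟩)
  have hmc : (m : ℝ) * c ^ 2 = ν ^ 2 * d := by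
    have hdm : (0 : ℝ) ≤ (d : ℝ) / m := by positivity
    have hsq : Real.sqrt ((d : ℝ) / m) ^ 2 = (d : ℝ) / m := Real.sq_sqrt hdm
    have hm0 : (m : ℝ) ≠ 0 := Nat.cast_ne_zero.mpr hm.ne'
    rw [hc, mul_pow, hsq]
    field_simp
  -- entries of F and G
  have hGij : ∀ i j, G i j = ((Q j * (Q j)ᵀ) *ᵥ fun p => (L - Lstar) p j) i :=
    fun i j => by rw [hG]; exact col_sum _ i j
  have hFij : ∀ i j, F i j = ((Q j * (Q j)ᵀ) *ᵥ fun p => (S - Sstar) p j) i :=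
    fun i j => by rw [hF]; exact col_sum _ i j
  rw [show vinf (Mmᵀ *ᵥ u) = ⨆ j, |(Mmᵀ *ᵥ u) j| from rfl]
  apply ciSup_le
  intro j
  set a := (Q j)ᵀ *ᵥ u with ha
  have hK : l2 a ≤ m * (c * B) :=
    l2_mulVecT_le _ u c B hui (fun p => hQe p j) hB0
  have hK0 : 0 ≤ (m : ℝ) * (c * B) := by positivity
  set g : Fin m → ℝ := fun p => (L - Lstar) p j with hg
  set e : Fin m → ℝ := fun p => E p j with he
  set T := Finset.univ.filter fun i => Sstar i j ≠ 0 with hT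
  have heT : ∀ i, i ∉ T → e i = 0 := by
    intro i hi
    have hSz : Sstar i j = 0 := by
      by_contra hne
      exact hi (Finset.mem_filter.mpr ⟨Finset.mem_univ _, hne⟩)
    by_contra hne
    have : (i, j) ∈ supp (Sstar - S) := by
      simp only [supp, Set.mem_setOf_eq]
      rw [← hE]
      exact hne
    exact (hsupp this) hSz
  -- row identity
  have hrow : (Mmᵀ *ᵥ u) j = ∑ i, u i * Mm i j := by
    simp [Matrix.mulVec, dotProduct, Matrix.transpose_apply, mul_comm]
  have hsplit : (Mmᵀ *ᵥ u) j =
      (∑ i, u i * G i j) + (∑ i, u i * F i j) + (∑ i, u i * E i j) := by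
    rw [hrow, hM]
    simp only [Matrix.add_apply, mul_add]
    rw [Finset.sum_add_distrib, Finset.sum_add_distrib]
    ring
  -- G term
  have hGdot : ∑ i, u i * G i j = a ⬝ᵥ ((Q j)ᵀ *ᵥ g) := by
    have h1 : (fun i => G i j) = (Q j * (Q j)ᵀ) *ᵥ g := funext fun i => hGij i j
    calc ∑ i, u i * G i j = u ⬝ᵥ fun i => G i j := rfl
    _ = u ⬝ᵥ ((Q j * (Q j)ᵀ) *ᵥ g) := by rw [h1]
    _ = u ⬝ᵥ (Q j *ᵥ ((Q j)ᵀ *ᵥ g)) := by rw [mulVec_mulVec]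
    _ = (u ᵥ* Q j) ⬝ᵥ ((Q j)ᵀ *ᵥ g) := by rw [dotProduct_mulVec]
    _ = a ⬝ᵥ ((Q j)ᵀ *ᵥ g) := by rw [ha]; simp [mulVec_transpose]
  have hGnorm : l2 ((Q j)ᵀ *ᵥ g) ≤ l := by
    have h1 : (fun p => G p j) = Q j *ᵥ ((Q j)ᵀ *ᵥ g) := by
      funext p; rw [hGij p j, ← mulVec_mulVec]
    have h2 := l2_mulVec_ortho (Q j) (hQortho j) ((Q j)ᵀ *ᵥ g)
    have := hlj j
    rw [h1, h2] at this
    exact this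
  have hTG : |∑ i, u i * G i j| ≤ (m * (c * B)) * l := by
    rw [hGdot]
    calc |a ⬝ᵥ ((Q j)ᵀ *ᵥ g)| ≤ l2 a * l2 ((Q j)ᵀ *ᵥ g) := abs_dot_le _ _
    _ ≤ (m * (c * B)) * l := mul_le_mul hK hGnorm (l2_nonneg _) hK0
  -- F term
  set φ : Fin m → ℝ := fun i => a ⬝ᵥ ((Q j)ᵀ *ᵥ Pi.single i 1) with hφ
  have hφb : ∀ i, |φ i| ≤ (m * (c * B)) * c := by
    intro i
    calc |φ i| ≤ l2 a * l2 ((Q j)ᵀ *ᵥ Pi.single i 1) := abs_dot_le _ _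
    _ ≤ (m * (c * B)) * c := mul_le_mul hK (hQe i j) (l2_nonneg _) hK0
  have hFdot : ∑ i, u i * F i j = -∑ i, e i * φ i := by
    have hcol : (fun p => (S - Sstar) p j) = -e := by
      funext p
      simp [he, hE, Matrix.sub_apply, Matrix.neg_apply]
    have h1 : (fun i => F i j) = (Q j * (Q j)ᵀ) *ᵥ (-e) := by
      funext i; rw [hFij i j, hcol]
    calc ∑ i, u i * F i j = u ⬝ᵥ fun i => F i j := rfl
    _ = u ⬝ᵥ ((Q j * (Q j)ᵀ) *ᵥ (-e)) := by rw [h1]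
    _ = (u ᵥ* Q j) ⬝ᵥ ((Q j)ᵀ *ᵥ (-e)) := by
        rw [← mulVec_mulVec, dotProduct_mulVec]
    _ = a ⬝ᵥ ((Q j)ᵀ *ᵥ (-e)) := by rw [ha]; simp [mulVec_transpose]
    _ = -(a ⬝ᵥ ((Q j)ᵀ *ᵥ e)) := by rw [mulVec_neg, dotProduct_neg]
    _ = -∑ i, e i * φ i := by
        rw [mulVec_decomp ((Q j)ᵀ) e, dot_sum_smul]
  have hTF : |∑ i, u i * F i j| ≤ (α₁ * m) * (s * ((m * (c * B)) * c)) := by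
    rw [hFdot, abs_neg]
    calc |∑ i, e i * φ i| ≤ ∑ i, |e i * φ i| := Finset.abs_sum_le_sum_abs _ _
    _ = ∑ i ∈ T, |e i * φ i| := by
        symm
        refine Finset.sum_subset (Finset.subset_univ _) ?_
        intro i _ hi
        rw [heT i hi]
        simp
    _ ≤ ∑ _i ∈ T, s * ((m * (c * B)) * c) := by
        refine Finset.sum_le_sum fun i _ => ?_
        rw [abs_mul]
        exact mul_le_mul (hEij i j) (hφb i) (abs_nonneg _) hs0
    _ = (T.card : ℝ) * (s * ((m * (c * B)) * c)) := by
        rw [Finset.sum_const, nsmul_eq_mul]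
    _ ≤ (α₁ * m) * (s * ((m * (c * B)) * c)) := by
        refine mul_le_mul_of_nonneg_right (hScol j) ?_
        positivity
  -- E term
  have hTE : |∑ i, u i * E i j| ≤ (α₁ * m) * (B * s) := by
    calc |∑ i, u i * E i j| ≤ ∑ i, |u i * E i j| := Finset.abs_sum_le_sum_abs _ _
    _ = ∑ i ∈ T, |u i * E i j| := by
        symm
        refine Finset.sum_subset (Finset.subset_univ _) ?_
        intro i _ hi
        have : E i j = 0 := heT i hi
        rw [this]
        simp
    _ ≤ ∑ _i ∈ T, B * s := by
        refine Finset.sum_le_sum fun i _ => ?_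
        rw [abs_mul]
        exact mul_le_mul (hui i) (hEij i j) (abs_nonneg _) hB0
    _ = (T.card : ℝ) * (B * s) := by rw [Finset.sum_const, nsmul_eq_mul]
    _ ≤ (α₁ * m) * (B * s) := by
        refine mul_le_mul_of_nonneg_right (hScol j) ?_
        positivity
  -- combine
  calc |(Mmᵀ *ᵥ u) j|
      ≤ |∑ i, u i * G i j| + |∑ i, u i * F i j| + |∑ i, u i * E i j| := by
        rw [hsplit]
        exact (abs_add_le _ _).trans (add_le_add_left (abs_add_le _ _) _)
  _ ≤ (m * (c * B)) * l + (α₁ * m) * (s * ((m * (c * B)) * c))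
        + (α₁ * m) * (B * s) := add_le_add (add_le_add hTG hTF) hTE
  _ = (c * l + α₁ * (1 + ν ^ 2 * d) * s) * m * B := by
        linear_combination (α₁ * s * B * (m : ℝ)) * hmc
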